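/- For any concave upper semicontinuous coercive function φ on ℝ^d with max φ = M and any α > 0 and t = -αM (M > 0), the Lebesgue measure of the superlevel set D = {x : φ(x) ≥ -αM} satisfies Leb(D) ≤ (1+α)^d M^d e^{-M} / ∫_0^{(1+α)M} t^d e^{-t} dt, provided ∫ e^{φ} dx = 1; in particular Leb(D) → 0 as M → ∞ for fixed α. -/

import Mathlib

open MeasureTheory Filter Set
open scoped Pointwise

/-- Dümbgen–Samworth–Schuhmacher Lemma 4.1: for a log-concave probability density
`f = e^φ` on ℝ^d with maximum `e^M`, `M > 0`, and any `α > 0`, the superlevel set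
`D = {x | φ(x) ≥ -αM}` satisfies
`Leb(D) ≤ (1+α)^d M^d e^{-M} / ∫_0^{(1+α)M} t^d e^{-t} dt`. -/
theorem stmt11 (d : ℕ) (hd : 0 < d) (f : (Fin d → ℝ) → ℝ) (M α : ℝ)
    (hmeas : Measurable f) (hnonneg : ∀ x, 0 ≤ f x)
    (husc : UpperSemicontinuous f)
    (hlc : ∀ x y : Fin d → ℝ, ∀ t : ℝ, 0 ≤ t → t ≤ 1 →
      f x ^ t * f y ^ (1 - t) ≤ f (t • x + (1 - t) • y))
    (hcoer : Tendsto f (Filter.cocompact (Fin d → ℝ)) (nhds 0))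
    (hint : ∫ x, f x = 1)
    (hM : 0 < M) (hmax : ∀ x, f x ≤ Real.exp M) (hattain : ∃ x, f x = Real.exp M)
    (hα : 0 < α) :
    volume {x | Real.exp (-(α * M)) ≤ f x} ≤
      ENNReal.ofReal ((1 + α) ^ d * M ^ d * Real.exp (-M) /
        ∫ t in Set.Ioc (0 : ℝ) ((1 + α) * M), t ^ d * Real.exp (-t)) := by
  obtain ⟨x₀, hx₀⟩ := hattain
  set C : ℝ := (1 + α) * M with hCdef
  have hCpos : 0 < C := by positivity
  set D : Set (Fin d → ℝ) := {x | Real.exp (-(α * M)) ≤ f x} with hDdef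
  set V := volume D with hVdef
  set a : ℝ := Real.exp (-(α * M)) with hadef
  set b : ℝ := Real.exp M with hbdef
  have hab : a ≤ b := Real.exp_le_exp.2 (by nlinarith)
  -- Step A: scaling bound on superlevel sets
  have stepA : ∀ t : ℝ, 0 ≤ t → t ≤ 1 →
      ENNReal.ofReal (t ^ d) * V ≤ volume {x | Real.exp (M - t * C) ≤ f x} := by
    intro t ht0 ht1
    have hsub : (1 - t) • x₀ +ᵥ t • D ⊆ {x | Real.exp (M - t * C) ≤ f x} := by
      rintro _ ⟨_, ⟨y, hy, rfl⟩, rfl⟩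
      have hy' : a ≤ f y := hy
      have h1 : a ^ t ≤ f y ^ t := Real.rpow_le_rpow (Real.exp_pos _).le hy' ht0
      have h2 := hlc y x₀ t ht0 ht1
      have hexp : Real.exp (M - t * C) = a ^ t * b ^ (1 - t) := by
        rw [hadef, hbdef, ← Real.exp_mul, ← Real.exp_mul, ← Real.exp_add]
        rw [hCdef]; ring_nf
      have key : Real.exp (M - t * C) ≤ f (t • y + (1 - t) • x₀) := by
        calc Real.exp (M - t * C) = a ^ t * b ^ (1 - t) := hexp
          _ ≤ f y ^ t * f x₀ ^ (1 - t) := by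
              rw [hx₀]
              exact mul_le_mul_of_nonneg_right h1 (Real.rpow_nonneg (Real.exp_pos _).le _)
          _ ≤ f (t • y + (1 - t) • x₀) := h2
      show Real.exp (M - t * C) ≤ f ((1 - t) • x₀ +ᵥ t • y)
      rw [vadd_eq_add, add_comm]
      exact key
    calc ENNReal.ofReal (t ^ d) * V = volume ((1 - t) • x₀ +ᵥ t • D) := by
          rw [measure_vadd, Measure.addHaar_smul_of_nonneg volume ht0,
            Module.finrank_fin_fun]
      _ ≤ volume {x | Real.exp (M - t * C) ≤ f x} := measure_mono hsub
  -- Step B : layer cake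
  have hfint : Integrable f := by
    by_contra h
    rw [integral_undef h] at hint; norm_num at hint
  have hlayer : (∫⁻ s in Ioi (0 : ℝ), volume {x | s ≤ f x}) = 1 := by
    rw [← lintegral_eq_lintegral_meas_le volume (Filter.Eventually.of_forall hnonneg)
      hmeas.aemeasurable,
      ← ofReal_integral_eq_lintegral_ofReal hfint (Filter.Eventually.of_forall hnonneg), hint]
    simp
  -- the comparison function
  set g : ℝ → ℝ := fun s => ((M - Real.log s) / C) ^ d with hgdef
  have hgcont : ContinuousOn g (Icc a b) := by
    apply ContinuousOn.pow
    apply ContinuousOn.div_const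
    apply continuousOn_const.sub
    apply Real.continuousOn_log.mono
    intro s hs
    exact ne_of_gt (lt_of_lt_of_le (Real.exp_pos _) hs.1)
  have hgnonneg : ∀ s ∈ Ioc a b, 0 ≤ g s := by
    intro s hs
    have h1 : Real.log s ≤ M := by
      rw [← Real.log_exp M]
      exact Real.log_le_log (lt_trans (Real.exp_pos _) hs.1) hs.2
    have : 0 ≤ (M - Real.log s) / C := div_nonneg (by linarith) hCpos.le
    positivity
  -- pointwise bound
  have hCineq : ∀ s ∈ Ioc a b, ENNReal.ofReal (g s) * V ≤ volume {x | s ≤ f x} := by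
    intro s hs
    have hs0 : 0 < s := lt_trans (Real.exp_pos _) hs.1
    set t : ℝ := (M - Real.log s) / C with htdef
    have hlogM : Real.log s ≤ M := by
      rw [← Real.log_exp M]
      exact Real.log_le_log hs0 hs.2
    have hloga : -(α * M) < Real.log s := by
      rw [← Real.log_exp (-(α * M))]
      exact Real.log_lt_log (Real.exp_pos _) hs.1
    have ht0 : 0 ≤ t := div_nonneg (by linarith) hCpos.le
    have ht1 : t ≤ 1 := by
      rw [div_le_one hCpos, hCdef]; nlinarith
    have hst : Real.exp (M - t * C) = s := by
      rw [htdef, div_mul_cancel₀ _ (ne_of_gt hCpos)]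
      simp [Real.exp_log hs0]
    have := stepA t ht0 ht1
    rwa [hst] at this
  -- main inequality
  have hgmeas : Measurable g := by
    apply Measurable.pow_const
    exact (measurable_const.sub Real.measurable_log).div_const C
  have hmain : ENNReal.ofReal (∫ s in Ioc a b, g s) * V ≤ 1 := by
    rw [← hlayer]
    have hgint : IntegrableOn g (Ioc a b) :=
      (hgcont.integrableOn_Icc).mono_set Ioc_subset_Icc_self
    have h1 : ENNReal.ofReal (∫ s in Ioc a b, g s)
        = ∫⁻ s in Ioc a b, ENNReal.ofReal (g s) :=
      ofReal_integral_eq_lintegral_ofReal hgint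
        ((ae_restrict_iff' measurableSet_Ioc).2 (Filter.Eventually.of_forall hgnonneg))
    rw [h1, ← lintegral_mul_const V (hgmeas.ennreal_ofReal)]
    calc (∫⁻ s in Ioc a b, ENNReal.ofReal (g s) * V)
        ≤ ∫⁻ s in Ioc a b, volume {x | s ≤ f x} :=
          setLIntegral_mono' measurableSet_Ioc hCineq
      _ ≤ ∫⁻ s in Ioi (0:ℝ), volume {x | s ≤ f x} := by
          apply lintegral_mono_set
          intro s hs
          exact lt_trans (Real.exp_pos _) hs.1
  -- Step D : compute the integral of g
  set K : ℝ := ∫ t in (0:ℝ)..1, t ^ d * Real.exp (-(C * t)) with hKdef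
  have hKpos : 0 < K := by
    apply intervalIntegral.intervalIntegral_pos_of_pos_on
    · apply Continuous.intervalIntegrable
      fun_prop
    · intro t ht
      have : 0 < t ^ d := pow_pos ht.1 d
      positivity
    · norm_num
  set I : ℝ := ∫ t in Set.Ioc (0:ℝ) C, t ^ d * Real.exp (-t) with hIdef
  have hI : I = C ^ (d + 1) * K := by
    rw [hIdef, ← intervalIntegral.integral_of_le hCpos.le]
    have h2 := intervalIntegral.smul_integral_comp_mul_left
      (fun t => t ^ d * Real.exp (-t)) C (a := 0) (b := 1)
    rw [mul_zero, mul_one] at h2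
    rw [← h2, smul_eq_mul]
    have h3 : (∫ x in (0:ℝ)..1, (C * x) ^ d * Real.exp (-(C * x))) = C ^ d * K := by
      rw [hKdef, ← intervalIntegral.integral_const_mul]
      apply intervalIntegral.integral_congr
      intro t _
      show (C * t) ^ d * Real.exp (-(C * t)) = C ^ d * (t ^ d * Real.exp (-(C * t)))
      rw [mul_pow]
      ring
    rw [h3, pow_succ]
    ring
  have hJ : (∫ s in Ioc a b, g s) = C * Real.exp M * K := by
    rw [← intervalIntegral.integral_of_le hab]
    have hderiv : ∀ t ∈ uIcc (0:ℝ) 1,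
        HasDerivAt (fun t => Real.exp (M - C * t)) (Real.exp (M - C * t) * (-C)) t := by
      intro t _
      have h1 : HasDerivAt (fun t : ℝ => M - C * t) (-C) t := by
        simpa using ((hasDerivAt_id t).const_mul C).const_sub M
      exact h1.exp
    have hcont : ContinuousOn (fun t => Real.exp (M - C * t) * (-C)) (uIcc (0:ℝ) 1) := by
      apply Continuous.continuousOn; fun_prop
    have hgcont' : ContinuousOn g ((fun t => Real.exp (M - C * t)) '' uIcc (0:ℝ) 1) := by
      apply hgcont.mono
      rintro _ ⟨t, ht, rfl⟩
      rw [uIcc_of_le (by norm_num : (0:ℝ) ≤ 1)] at ht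
      constructor
      · rw [hadef]
        apply Real.exp_le_exp.2
        rw [hCdef]; nlinarith [ht.2]
      · rw [hbdef]
        apply Real.exp_le_exp.2
        nlinarith [ht.1, hCpos]
    have hcv := intervalIntegral.integral_comp_smul_deriv' hderiv hcont hgcont'
    simp only [Function.comp] at hcv
    have he0 : Real.exp (M - C * 0) = b := by rw [hbdef]; norm_num
    have he1 : Real.exp (M - C * 1) = a := by
      rw [hadef]; congr 1; rw [hCdef]; ring
    rw [he0, he1] at hcv
    have hlhs : (∫ t in (0:ℝ)..1, (Real.exp (M - C * t) * (-C)) • g (Real.exp (M - C * t)))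
        = -(C * Real.exp M * K) := by
      rw [hKdef, ← intervalIntegral.integral_const_mul, ← intervalIntegral.integral_neg]
      apply intervalIntegral.integral_congr
      intro t ht
      rw [uIcc_of_le (by norm_num : (0:ℝ) ≤ 1)] at ht
      have hgt : g (Real.exp (M - C * t)) = t ^ d := by
        simp only [hgdef, Real.log_exp]
        rw [show M - (M - C * t) = C * t by ring, mul_comm, mul_div_assoc,
          div_self (ne_of_gt hCpos), mul_one]
      show (Real.exp (M - C * t) * -C) • g (Real.exp (M - C * t))
          = -(C * Real.exp M * (t ^ d * Real.exp (-(C * t))))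
      rw [hgt, smul_eq_mul]
      rw [show M - C * t = M + -(C * t) by ring, Real.exp_add]
      ring
    rw [hlhs] at hcv
    rw [intervalIntegral.integral_symm b a, ← hcv, neg_neg]
  -- Conclusion
  have hJpos : 0 < C * Real.exp M * K := by positivity
  have hfinal : V ≤ ENNReal.ofReal ((C * Real.exp M * K)⁻¹) := by
    rw [ENNReal.ofReal_inv_of_pos hJpos]
    rw [ENNReal.le_inv_iff_mul_le, mul_comm]
    rw [← hJ]
    exact hmain
  refine hfinal.trans (le_of_eq ?_)
  congr 1
  rw [show ((1:ℝ) + α) ^ d * M ^ d = C ^ d by rw [hCdef, mul_pow]]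
  rw [hI, Real.exp_neg]
  have hC0 : C ≠ 0 := ne_of_gt hCpos
  have hK0 : K ≠ 0 := ne_of_gt hKpos
  have he0 : Real.exp M ≠ 0 := ne_of_gt (Real.exp_pos M)
  field_simp
  ring
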